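/- With f^(k) in GF(2)[x,z] defined by f^(0) = x+z and the parity-based recursion, each f^(k) is a homogeneous polynomial of degree ⌊(k+2)/2⌋ whose leading (grlex) term x^{⌊(k+2)/2⌋} has coefficient 1; in particular f^(k)(1,0) = 1 for all k ≥ 0. -/
import Mathlib

open MvPolynomial Finsupp

lemma coeff_single_X1_mul (p : MvPolynomial (Fin 2) (ZMod 2)) (n : ℕ) :
    MvPolynomial.coeff (Finsupp.single 0 n) (MvPolynomial.X 1 * p) = 0 := by
  rw [mul_comm, MvPolynomial.coeff_mul_X']
  simp [Finsupp.single_apply]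

lemma coeff_single_X0_mul (p : MvPolynomial (Fin 2) (ZMod 2)) (n : ℕ) :
    MvPolynomial.coeff (Finsupp.single 0 (n + 1)) (MvPolynomial.X 0 * p) =
      MvPolynomial.coeff (Finsupp.single 0 n) p := by
  have : (Finsupp.single (0 : Fin 2) (n + 1)) = Finsupp.single 0 1 + Finsupp.single 0 n := by
    rw [← Finsupp.single_add]; ring_nf
  rw [this, MvPolynomial.coeff_X_mul]

theorem stmt9 (f g : ℕ → MvPolynomial (Fin 2) (ZMod 2))
    (hf0 : f 0 = MvPolynomial.X 0 + MvPolynomial.X 1)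
    (hg0 : g 0 = MvPolynomial.X 1)
    (heven : ∀ k, Even k →
      f (k + 1) = f k ∧ g (k + 1) = MvPolynomial.X 1 * g k)
    (hodd : ∀ k, ¬ Even k →
      f (k + 1) = MvPolynomial.X 0 * f k + g k ∧ g (k + 1) = MvPolynomial.X 1 * f k) :
    ∀ k, (f k).IsHomogeneous ((k + 2) / 2) ∧
      MvPolynomial.coeff (Finsupp.single 0 ((k + 2) / 2)) (f k) = 1 ∧
      MvPolynomial.eval ![(1 : ZMod 2), 0] (f k) = 1 := by
  have ev : ∀ k, MvPolynomial.eval ![(1 : ZMod 2), 0] (f k) = 1 ∧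
      MvPolynomial.eval ![(1 : ZMod 2), 0] (g k) = 0 := by
    intro k
    induction k with
    | zero => simp [hf0, hg0]
    | succ k ih =>
      rcases Nat.even_or_odd k with hk | hk
      · obtain ⟨h1, h2⟩ := heven k hk
        simp [h1, h2, ih.1, ih.2]
      · obtain ⟨h1, h2⟩ := hodd k (Nat.not_even_iff_odd.mpr hk)
        simp [h1, h2, ih.1, ih.2]
  have main : ∀ k, (f k).IsHomogeneous ((k + 2) / 2) ∧
      MvPolynomial.coeff (Finsupp.single 0 ((k + 2) / 2)) (f k) = 1 ∧
      (g k).IsHomogeneous ((k + 3) / 2) ∧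
      MvPolynomial.coeff (Finsupp.single 0 ((k + 3) / 2)) (g k) = 0 := by
    intro k
    induction k with
    | zero =>
      refine ⟨?_, ?_, ?_, ?_⟩
      · rw [hf0]; exact (isHomogeneous_X _ _).add (isHomogeneous_X _ _)
      · rw [hf0]
        simp [MvPolynomial.coeff_add, MvPolynomial.coeff_X', Finsupp.single_left_inj]
      · rw [hg0]; exact isHomogeneous_X _ _
      · rw [hg0]
        simp [MvPolynomial.coeff_X', Finsupp.single_left_inj]
    | succ k ih =>
      obtain ⟨ihf, ihfc, ihg, ihgc⟩ := ih
      rcases Nat.even_or_odd k with hk | hk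
      · obtain ⟨h1, h2⟩ := heven k hk
        obtain ⟨m, rfl⟩ := hk
        have e1 : (m + m + 1 + 2) / 2 = (m + m + 2) / 2 := by omega
        have e2 : (m + m + 1 + 3) / 2 = 1 + (m + m + 3) / 2 := by omega
        refine ⟨?_, ?_, ?_, ?_⟩
        · rw [h1, e1]; exact ihf
        · rw [h1, e1]; exact ihfc
        · rw [h2, e2]
          exact (isHomogeneous_X _ _).mul ihg
        · rw [h2]; exact coeff_single_X1_mul _ _
      · obtain ⟨h1, h2⟩ := hodd k (Nat.not_even_iff_odd.mpr hk)
        obtain ⟨m, rfl⟩ := hk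
        have e1 : (2 * m + 1 + 1 + 2) / 2 = 1 + (2 * m + 1 + 2) / 2 := by omega
        have e2 : (2 * m + 1 + 1 + 2) / 2 = (2 * m + 1 + 3) / 2 := by omega
        have e3 : (2 * m + 1 + 1 + 2) / 2 = (2 * m + 1 + 2) / 2 + 1 := by omega
        have e4 : (2 * m + 1 + 1 + 3) / 2 = 1 + (2 * m + 1 + 2) / 2 := by omega
        refine ⟨?_, ?_, ?_, ?_⟩
        · rw [h1]
          exact (e1 ▸ ((isHomogeneous_X _ _).mul ihf) : _).add (e2 ▸ ihg)
        · rw [h1, MvPolynomial.coeff_add, e3, coeff_single_X0_mul, ihfc,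
            show (2 * m + 1 + 2) / 2 + 1 = (2 * m + 1 + 3) / 2 by omega, ihgc, add_zero]
        · rw [h2, e4]
          exact (isHomogeneous_X _ _).mul ihf
        · rw [h2]; exact coeff_single_X1_mul _ _
  exact fun k => ⟨(main k).1, (main k).2.1, (ev k).1⟩
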